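/- arXiv:math/0701364 — 8 statements merged into one kernel-verified Lean document; each statement's English description precedes it below -/
import Mathlib

section
/- Let 𝒢 = (G, o, R_1, …, R_n) be a functional Menger system of rank n, let H ⊆ G be an l-unitary normal v-complex, and let U ⊆ G satisfy H ⊆ U and R_i U ⊆ H for every i ∈ {1,…,n}. Then for all x, y ∈ G: if x ≤ y and x ∈ H, then y ∈ H. -/
universe u

/-- A functional Menger system of rank `n`: an `(n+1)`-ary operation `o`
(written `x[y₁…yₙ]` in the paper) and `n` unary operations `R i`,
satisfying axioms A1–A7. -/
structure MengerSystem (n : ℕ) (G : Type u) where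
  o : G → (Fin n → G) → G
  R : Fin n → G → G
  A1 : ∀ (x : G) (y z : Fin n → G),
    o (o x y) z = o x fun i => o (y i) z
  A2 : ∀ x : G, o x (fun i => R i x) = x
  A3 : ∀ (x : G) (u : Fin n → G) (i : Fin n) (z y : G),
    o (o x (Function.update u i z)) (fun j => R j y)
      = o x (Function.update u i (o z fun j => R j y))
  A4 : ∀ (i : Fin n) (x y : G),
    R i (o x fun j => R j y) = o (R i x) fun j => R j y
  A5 : ∀ (x y z : G),
    o (o x fun j => R j y) (fun j => R j z)
      = o (o x fun j => R j z) (fun j => R j y)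
  A6 : ∀ (i k : Fin n) (x : G) (y : Fin n → G),
    R i (o x y) = R i (o (R k x) y)
  A7 : ∀ (i : Fin n) (x : G) (y : Fin n → G),
    o (R i x) y = o (y i) fun j => R j (o x y)

namespace MengerSystem

variable {n : ℕ} {G : Type u}

/-- `T_n(G)`: the least set of transformations of `G` containing the identity and
closed under `t ↦ (x ↦ a[b̄|ᵢ t x])` and `t ↦ (x ↦ Rᵢ (t x))`. -/
inductive IsTn (M : MengerSystem n G) : (G → G) → Prop
  | id : IsTn M id
  | op (t : G → G) (a : G) (b : Fin n → G) (i : Fin n) :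
      IsTn M t → IsTn M fun x => M.o a (Function.update b i (t x))
  | proj (t : G → G) (i : Fin n) :
      IsTn M t → IsTn M fun x => M.R i (t x)

/-- quasi-stable: `x ∈ H → x[x…x] ∈ H`. -/
def QuasiStable (M : MengerSystem n G) (H : Set G) : Prop :=
  ∀ x ∈ H, M.o x (fun _ => x) ∈ H

/-- l-unitary: `x[y…y] ∈ H ∧ y ∈ H → x ∈ H`. -/
def LUnitary (M : MengerSystem n G) (H : Set G) : Prop :=
  ∀ x y : G, M.o x (fun _ => y) ∈ H → y ∈ H → x ∈ H

/-- normal v-complex: `x, y ∈ H ∧ t x ∈ H → t y ∈ H` for all `t ∈ T_n(G)`. -/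
def NormalVComplex (M : MengerSystem n G) (H : Set G) : Prop :=
  ∀ t : G → G, M.IsTn t → ∀ x ∈ H, ∀ y ∈ H, t x ∈ H → t y ∈ H

/-- stable: `x, y₁, …, yₙ ∈ H → x[y₁…yₙ] ∈ H`. -/
def Stable (M : MengerSystem n G) (H : Set G) : Prop :=
  ∀ (x : G) (y : Fin n → G), x ∈ H → (∀ i, y i ∈ H) → M.o x y ∈ H

/-- v-unitary: `x[y₁…yₙ] ∈ H ∧ y₁, …, yₙ ∈ H → x ∈ H`. -/
def VUnitary (M : MengerSystem n G) (H : Set G) : Prop :=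
  ∀ (x : G) (y : Fin n → G), M.o x y ∈ H → (∀ i, y i ∈ H) → x ∈ H

/-- l-ideal: `x[y₁…yₙ] ∈ H` whenever some `yᵢ ∈ H`. -/
def LIdeal (M : MengerSystem n G) (H : Set G) : Prop :=
  ∀ (x : G) (y : Fin n → G), (∃ i, y i ∈ H) → M.o x y ∈ H

/-- the order `x ≤ y ↔ x = y[R₁x…Rₙx]` (the relation ζ). -/
def le (M : MengerSystem n G) (x y : G) : Prop :=
  x = M.o y fun i => M.R i x

/-- the quasi-order `x ⊏ y ↔ R₁x ≤ R₁y` (the relation χ). -/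
def sub (M : MengerSystem n G) [NeZero n] (x y : G) : Prop :=
  M.le (M.R 0 x) (M.R 0 y)

/-- v-regular binary relation. -/
def VRegular (M : MengerSystem n G) (ρ : G → G → Prop) : Prop :=
  ∀ (z : G) (x y : Fin n → G), (∀ i, ρ (x i) (y i)) → ρ (M.o z x) (M.o z y)

end MengerSystem

/-- An `n`-place function on `A`: a partial map from `Aⁿ` to `A`. -/
def NPlace (n : ℕ) (A : Type u) : Type u := (Fin n → A) → Part A

namespace NPlace

variable {n : ℕ} {A : Type u}

/-- Menger composition `f[g₁…gₙ]` of `n`-place functions. -/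
def comp (f : NPlace n A) (g : Fin n → NPlace n A) : NPlace n A :=
  fun a =>
    (⟨∀ i, (g i a).Dom, fun h i => (g i a).get (h i)⟩ : Part (Fin n → A)).bind f

/-- `Rᵢ f`: same domain as `f`, value `(Rᵢ f)(a₁,…,aₙ) = aᵢ`. -/
def Ri (i : Fin n) (f : NPlace n A) : NPlace n A :=
  fun a => (f a).map fun _ => a i

/-- Set-theoretic intersection of two `n`-place functions (as sets of pairs). -/
def inter (f g : NPlace n A) : NPlace n A :=
  fun a => ⟨(f a).Dom ∧ f a = g a, fun h => (f a).get h.1⟩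

end NPlace

/-- A representation of a functional Menger system by `n`-place functions. -/
def MengerSystem.IsRep {n : ℕ} {G : Type u} (M : MengerSystem n G) {A : Type u}
    (P : G → NPlace n A) : Prop :=
  (∀ (x : G) (y : Fin n → G), P (M.o x y) = NPlace.comp (P x) fun i => P (y i)) ∧
  (∀ (i : Fin n) (x : G), P (M.R i x) = NPlace.Ri i (P x))

/-- A nonempty `H ⊆ G` is a stabilizer of `M` if there are a representation `P`
on some set `A` and a point `a ∈ A` with `H = {g | P g (a,…,a) = a}`. -/
def MengerSystem.IsStabilizer {n : ℕ} {G : Type u} (M : MengerSystem n G)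
    (H : Set G) : Prop :=
  ∃ (A : Type u) (P : G → NPlace n A) (a : A),
    M.IsRep P ∧ H = {g : G | a ∈ P g fun _ => a}

/-- Condition (f-4): if `H` is an l-unitary normal v-complex, `H ⊆ U` and
`Rᵢ U ⊆ H`, then `x ≤ y ∧ x ∈ H → y ∈ H`. -/
theorem mem_of_le {n : ℕ} {G : Type u} (M : MengerSystem n G)
    (H U : Set G) (hlu : M.LUnitary H) (hnc : M.NormalVComplex H)
    (hHU : H ⊆ U) (hRU : ∀ i : Fin n, ∀ x ∈ U, M.R i x ∈ H) :
    ∀ x y : G, M.le x y → x ∈ H → y ∈ H := by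
  intro x y hle hx
  have hRx : ∀ i : Fin n, M.R i x ∈ H := fun i => hRU i x (hHU hx)
  set w : ℕ → Fin n → G := fun k i => if i.val < k then x else M.R i x with hw
  have key : ∀ k, k ≤ n → M.o y (w k) ∈ H := by
    intro k
    induction k with
    | zero =>
      intro _
      have h0 : w 0 = fun i => M.R i x := by funext i; simp [hw]
      rw [h0, ← hle]; exact hx
    | succ k ih =>
      intro hk
      have hk' : k < n := hk
      set i : Fin n := ⟨k, hk'⟩ with hi
      have h1 : Function.update (w k) i (M.R i x) = w k := by
        funext j
        rcases eq_or_ne j i with rfl | hji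
        · simp [hw, hi]
        · simp [Function.update_of_ne hji]
      have h2 : Function.update (w k) i x = w (k + 1) := by
        funext j
        rcases eq_or_ne j i with rfl | hji
        · simp [hw, hi]
        · have hjk : (j : ℕ) ≠ k := fun h => hji (Fin.ext h)
          have hcond : ((j : ℕ) < k) ↔ ((j : ℕ) < k + 1) := by omega
          simp [Function.update_of_ne hji, hw, hcond]
      have ht : M.IsTn (fun z => M.o y (Function.update (w k) i z)) :=
        MengerSystem.IsTn.op id y (w k) i MengerSystem.IsTn.id
      have h3 := hnc _ ht (M.R i x) (hRx i) x hx
        (by simpa [h1] using ih (le_of_lt hk'))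
      simpa [h2] using h3
  have hn := key n le_rfl
  have hwn : w n = fun _ => x := by funext i; simp [hw, i.isLt]
  rw [hwn] at hn
  exact hlu y x hn hx
end

section
/- Let 𝒢 = (G, o, R_1, …, R_n) be a functional Menger system of rank n, let H ⊆ G be an l-unitary normal v-complex, and let U ⊆ G satisfy H ⊆ U, R_i U ⊆ H and R_i(G∖U) ⊆ G∖U for every i ∈ {1,…,n}. Then for all x, y ∈ G: if x ⊏ y and x ∈ U, then y ∈ U. -/
universe u

/-- Condition (f-5): if `H` is an l-unitary normal v-complex, `H ⊆ U`,
`Rᵢ U ⊆ H` and `Rᵢ (G∖U) ⊆ G∖U`, then `x ⊏ y ∧ x ∈ U → y ∈ U`. -/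
theorem mem_of_sub {n : ℕ} {G : Type u} [NeZero n] (M : MengerSystem n G)
    (H U : Set G) (hlu : M.LUnitary H) (hnc : M.NormalVComplex H)
    (hHU : H ⊆ U) (hRU : ∀ i : Fin n, ∀ x ∈ U, M.R i x ∈ H)
    (hRU' : ∀ i : Fin n, ∀ x ∈ Uᶜ, M.R i x ∈ Uᶜ) :
    ∀ x y : G, M.sub x y → x ∈ U → y ∈ U := by
  intro x y hxy hxU
  by_contra hyU
  have hRy : M.R 0 y ∈ Uᶜ := hRU' 0 y hyU
  have hRx : M.R 0 x ∈ H := hRU 0 x hxU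
  have hcH : M.R 0 (M.R 0 x) ∈ H := hRU 0 _ (hHU hRx)
  have harg : ∀ i : Fin n, M.R i (M.R 0 x) ∈ H := fun i => hRU i _ (hHU hRx)
  have key : ∀ k : ℕ, k ≤ n →
      M.o (M.R 0 y) (fun i : Fin n =>
        if (i : ℕ) < k then M.R 0 (M.R 0 x) else M.R i (M.R 0 x)) ∈ H := by
    intro k hk
    induction k with
    | zero =>
        have : M.o (M.R 0 y) (fun i : Fin n => M.R i (M.R 0 x)) ∈ H := hxy ▸ hRx
        simpa using this
    | succ k ih =>
        have hkn : k < n := Nat.lt_of_succ_le hk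
        set f : Fin n → G := fun i : Fin n =>
          if (i : ℕ) < k then M.R 0 (M.R 0 x) else M.R i (M.R 0 x) with hf
        have hfH : M.o (M.R 0 y) f ∈ H := ih (Nat.le_of_lt hkn)
        have ht : M.IsTn (fun z => M.o (M.R 0 y) (Function.update f ⟨k, hkn⟩ z)) :=
          MengerSystem.IsTn.op id (M.R 0 y) f ⟨k, hkn⟩ MengerSystem.IsTn.id
        have hfk : f ⟨k, hkn⟩ ∈ H := by
          simp only [hf]
          simpa using harg ⟨k, hkn⟩
        have htfk : M.o (M.R 0 y) (Function.update f ⟨k, hkn⟩ (f ⟨k, hkn⟩)) ∈ H := by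
          rw [Function.update_eq_self]; exact hfH
        have htc := hnc _ ht (f ⟨k, hkn⟩) hfk (M.R 0 (M.R 0 x)) hcH htfk
        have heq : Function.update f ⟨k, hkn⟩ (M.R 0 (M.R 0 x)) =
            fun i : Fin n =>
              if (i : ℕ) < k + 1 then M.R 0 (M.R 0 x) else M.R i (M.R 0 x) := by
          funext i
          rcases eq_or_ne i ⟨k, hkn⟩ with h | h
          · subst h; simp
          · rw [Function.update_of_ne h, hf]
            have hik : (i : ℕ) ≠ k := fun hc => h (Fin.ext hc)
            have h2 : ((i : ℕ) < k + 1) ↔ ((i : ℕ) < k) := by omega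
            simp only [h2]
        rw [heq] at htc
        exact htc
  have hall := key n le_rfl
  have : M.o (M.R 0 y) (fun _ : Fin n => M.R 0 (M.R 0 x)) ∈ H := by
    have : (fun i : Fin n =>
        if (i : ℕ) < n then M.R 0 (M.R 0 x) else M.R i (M.R 0 x)) =
        fun _ : Fin n => M.R 0 (M.R 0 x) := by
      funext i; simp [i.isLt]
    rwa [this] at hall
  have : M.R 0 y ∈ H := hlu _ _ this hcH
  exact hRy (hHU this)
end

section
/- Let 𝒢 = (G, o, R_1, …, R_n) be a functional Menger system of rank n, let H ⊆ G be an l-unitary normal v-complex, and let U ⊆ G satisfy H ⊆ U, R_i U ⊆ H and R_i(G∖U) ⊆ G∖U for every i ∈ {1,…,n}. Then G∖U is an l-ideal of 𝒢: for all x ∈ G, u ∈ G, w̄ ∈ G^n and i ∈ {1,…,n}, if x ∈ G∖U then u[w̄|_i x] ∈ G∖U; equivalently, x[y_1…y_n] ∈ G∖U whenever at least one y_i ∈ G∖U. -/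
universe u

/-- An l-unitary normal v-complex is v-unitary (given a witness index). -/
lemma vunit_aux {n : ℕ} {G : Type u} (M : MengerSystem n G) (H : Set G)
    (hlu : M.LUnitary H) (hnc : M.NormalVComplex H)
    (x : G) (y : Fin n → G) (j0 : Fin n)
    (hxy : M.o x y ∈ H) (hy : ∀ i, y i ∈ H) : x ∈ H := by
  set yb : ℕ → Fin n → G := fun k i => if (i : ℕ) < k then y j0 else y i with hyb
  have key : ∀ k, M.o x (yb k) ∈ H := by
    intro k
    induction k with
    | zero => simpa [hyb] using hxy
    | succ k ih =>
      by_cases hk : k < n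
      · set kf : Fin n := ⟨k, hk⟩ with hkf
        have h1 : yb k = Function.update (yb k) kf (y kf) := by
          funext i
          rcases eq_or_ne i kf with rfl | hne
          · simp [hyb, hkf]
          · simp [Function.update_of_ne hne]
        have h2 : yb (k + 1) = Function.update (yb k) kf (y j0) := by
          funext i
          rcases eq_or_ne i kf with rfl | hne
          · simp [hyb, hkf]
          · have hik : (i : ℕ) ≠ k := fun h => hne (Fin.ext h)
            by_cases hlt : (i : ℕ) < k
            · simp [Function.update_of_ne hne, hyb, hlt, Nat.lt_succ_of_lt hlt]
            · have h' : ¬ (i : ℕ) < k + 1 := by omega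
              simp [Function.update_of_ne hne, hyb, hlt, h']
        have ht : M.IsTn fun w => M.o x (Function.update (yb k) kf (id w)) :=
          MengerSystem.IsTn.op id x (yb k) kf MengerSystem.IsTn.id
        have := hnc _ ht (y kf) (hy kf) (y j0) (hy j0) (by simpa [← h1] using ih)
        simpa [← h2] using this
      · have : yb (k + 1) = yb k := by
          funext i
          have h1 : (i : ℕ) < k := lt_of_lt_of_le i.isLt (le_of_not_gt hk)
          simp [hyb, h1, Nat.lt_succ_of_lt h1]
        rw [this]; exact ih
  have hn : M.o x (fun _ => y j0) ∈ H := by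
    have := key n
    have he : yb n = fun _ => y j0 := by
      funext i; simp [hyb, i.isLt]
    rwa [he] at this
  exact hlu x (y j0) hn (hy j0)

/-- `G∖U` is an l-ideal: if `x ∈ G∖U` then `u[w̄|ᵢ x] ∈ G∖U`; equivalently,
`x[y₁…yₙ] ∈ G∖U` whenever some `yᵢ ∈ G∖U`. -/
theorem compl_lIdeal {n : ℕ} {G : Type u} (M : MengerSystem n G)
    (H U : Set G) (hlu : M.LUnitary H) (hnc : M.NormalVComplex H)
    (hHU : H ⊆ U) (hRU : ∀ i : Fin n, ∀ x ∈ U, M.R i x ∈ H)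
    (hRU' : ∀ i : Fin n, ∀ x ∈ Uᶜ, M.R i x ∈ Uᶜ) :
    (∀ (x : G) (u : G) (w : Fin n → G) (i : Fin n),
      x ∈ Uᶜ → M.o u (Function.update w i x) ∈ Uᶜ) ∧ M.LIdeal Uᶜ := by
  have main : ∀ (x : G) (u : G) (w : Fin n → G) (i : Fin n),
      x ∈ Uᶜ → M.o u (Function.update w i x) ∈ Uᶜ := by
    intro x u w i hx
    set ybar : Fin n → G := Function.update w i x with hybar
    intro hz
    -- hz : M.o u ybar ∈ U
    set z : G := M.o u ybar with hzdef
    have hRz : ∀ j, M.R j z ∈ H := fun j => hRU j z hz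
    -- key computation: (R j x)[R̄ z] = R j z ∈ H
    have hkey : ∀ j : Fin n, M.o (M.R j x) (fun k => M.R k z) ∈ H := by
      intro j
      have e1 : M.o (M.R j x) (fun k => M.R k z) = M.R j (M.o x fun k => M.R k z) :=
        (M.A4 j x z).symm
      have e2 : M.o (M.R i u) ybar = M.o x fun k => M.R k z := by
        have := M.A7 i u ybar
        simpa [hybar, Function.update_self] using this
      have e3 : M.R j (M.o u ybar) = M.R j (M.o (M.R i u) ybar) := M.A6 j i u ybar
      rw [e1, ← e2, ← e3]
      exact hRz j
    -- v-unitarity gives R j x ∈ H ⊆ U, contradicting R j x ∈ Uᶜ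
    have hRxH : M.R i x ∈ H :=
      vunit_aux M H hlu hnc (M.R i x) (fun k => M.R k z) i (hkey i) hRz
    exact hRU' i x hx (hHU hRxH)
  refine ⟨main, ?_⟩
  intro x y ⟨i, hyi⟩
  have : Function.update y i (y i) = y := Function.update_eq_self i y
  have := main (y i) x y i hyi
  rwa [Function.update_eq_self] at this
end

section
/- Let 𝒢 = (G, o, R_1, …, R_n) be a functional Menger system of rank n, let H ⊆ G be a quasi-stable l-unitary normal v-complex, and let U ⊆ G satisfy H ⊆ U, R_i U ⊆ H, R_i(G∖U) ⊆ G∖U for every i ∈ {1,…,n}, and the condition: x, y ∈ H and t(x) ∈ U imply t(y) ∈ U for all t ∈ T_n(G). Define E_H = {(x,y) : for all t ∈ T_n(G), t(x) ∈ H ⇔ t(y) ∈ H} and E_U = {(x,y) : for all t ∈ T_n(G), t(x) ∈ U ⇔ t(y) ∈ U}, and let E = E_H ∩ E_U. Then E is a v-regular equivalence relation on G, and H is an equivalence class of E. -/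
universe u

theorem MengerSystem.IsTn.comp {n : ℕ} {G : Type u} {M : MengerSystem n G} {t s : G → G}
    (ht : M.IsTn t) (hs : M.IsTn s) : M.IsTn (t ∘ s) := by
  induction ht with
  | id => exact hs
  | op t' a b i _ ih => exact MengerSystem.IsTn.op _ a b i ih
  | proj t' i _ ih => exact MengerSystem.IsTn.proj _ i ih

/-- The relation `E = E_H ∩ E_U` is a v-regular equivalence relation and `H` is
one of its equivalence classes. -/
theorem E_vRegular_equivalence {n : ℕ} {G : Type u} (M : MengerSystem n G)
    (H U : Set G) (hH : H.Nonempty)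
    (hqs : M.QuasiStable H) (hlu : M.LUnitary H) (hnc : M.NormalVComplex H)
    (hHU : H ⊆ U) (hRU : ∀ i : Fin n, ∀ x ∈ U, M.R i x ∈ H)
    (hRU' : ∀ i : Fin n, ∀ x ∈ Uᶜ, M.R i x ∈ Uᶜ)
    (hf1 : ∀ (x y : G) (t : G → G), M.IsTn t →
      x ∈ H → y ∈ H → t x ∈ U → t y ∈ U)
    (E : G → G → Prop)
    (hE : ∀ x y : G, E x y ↔
      ((∀ t : G → G, M.IsTn t → (t x ∈ H ↔ t y ∈ H)) ∧
       (∀ t : G → G, M.IsTn t → (t x ∈ U ↔ t y ∈ U)))) :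
    Equivalence E ∧ M.VRegular E ∧ ∃ x : G, H = {y : G | E x y} := by
  have hequiv : Equivalence E := by
    constructor
    · intro x; rw [hE]; exact ⟨fun t _ => Iff.rfl, fun t _ => Iff.rfl⟩
    · intro x y h; rw [hE] at h ⊢
      exact ⟨fun t ht => (h.1 t ht).symm, fun t ht => (h.2 t ht).symm⟩
    · intro x y z h1 h2; rw [hE] at h1 h2 ⊢
      exact ⟨fun t ht => (h1.1 t ht).trans (h2.1 t ht),
             fun t ht => (h1.2 t ht).trans (h2.2 t ht)⟩
  refine ⟨hequiv, ?_, ?_⟩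
  · -- v-regularity
    intro z x y hxy
    -- single-coordinate update lemma
    have key : ∀ (u : Fin n → G) (i : Fin n),
        E (M.o z (Function.update u i (x i))) (M.o z (Function.update u i (y i))) := by
      intro u i
      have hi := hxy i
      rw [hE] at hi ⊢
      have hs : M.IsTn (fun w => M.o z (Function.update u i w)) := by
        simpa using MengerSystem.IsTn.op id z u i MengerSystem.IsTn.id
      constructor
      · intro t ht
        exact hi.1 (t ∘ fun w => M.o z (Function.update u i w)) (ht.comp hs)
      · intro t ht
        exact hi.2 (t ∘ fun w => M.o z (Function.update u i w)) (ht.comp hs)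
    -- chain over coordinates
    set w : ℕ → Fin n → G := fun k i => if (i : ℕ) < k then y i else x i with hw
    have h0 : w 0 = x := by funext i; simp [hw]
    have hn : w n = y := by funext i; simp [hw, i.isLt]
    have step : ∀ k : ℕ, k < n → E (M.o z (w k)) (M.o z (w (k + 1))) := by
      intro k hk
      have hk' : w k = Function.update (w k) ⟨k, hk⟩ (x ⟨k, hk⟩) := by
        funext j
        rcases eq_or_ne j ⟨k, hk⟩ with rfl | hj
        · simp [hw]
        · simp [Function.update_of_ne hj]
      have hk'' : w (k + 1) = Function.update (w k) ⟨k, hk⟩ (y ⟨k, hk⟩) := by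
        funext j
        rcases eq_or_ne j ⟨k, hk⟩ with rfl | hj
        · simp [hw]
        · have : (j : ℕ) ≠ k := fun h => hj (Fin.ext h)
          rcases lt_or_ge (j : ℕ) k with h | h
          · simp [hw, Function.update_of_ne hj, h, Nat.lt_succ_of_lt h]
          · have h1 : ¬ (j : ℕ) < k := not_lt.mpr h
            have h2 : ¬ (j : ℕ) < k + 1 := by omega
            simp [hw, Function.update_of_ne hj, h1, h2]
      rw [hk'']
      nth_rewrite 1 [hk']
      exact key (w k) ⟨k, hk⟩
    have chain : ∀ k : ℕ, k ≤ n → E (M.o z (w 0)) (M.o z (w k)) := by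
      intro k
      induction k with
      | zero => intro _; exact hequiv.refl _
      | succ k ih =>
        intro hk
        exact hequiv.trans (ih (Nat.le_of_succ_le hk)) (step k hk)
    have := chain n le_rfl
    rwa [h0, hn] at this
  · -- H is an equivalence class
    obtain ⟨x₀, hx₀⟩ := hH
    refine ⟨x₀, Set.ext fun y => ⟨fun hy => ?_, fun hy => ?_⟩⟩
    · rw [Set.mem_setOf_eq, hE]
      constructor
      · intro t ht
        exact ⟨fun h => hnc t ht x₀ hx₀ y hy h, fun h => hnc t ht y hy x₀ hx₀ h⟩
      · intro t ht
        exact ⟨fun h => hf1 x₀ y t ht hx₀ hy h, fun h => hf1 y x₀ t ht hy hx₀ h⟩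
    · rw [Set.mem_setOf_eq, hE] at hy
      exact (hy.1 id MengerSystem.IsTn.id).mp hx₀
end

section
/- Let (G, o) be a Menger algebra of rank n (an (n+1)-ary operation x[y_1…y_n] satisfying the superassociativity law A1), let E be a v-regular equivalence relation on G, and let W be either the empty set or an l-ideal of (G,o) that is an E-class. Then the simplest representation P_{(E,W)} is a representation of (G, o) by n-place functions: for all g, g_1,…,g_n ∈ G, P_{(E,W)}(g[g_1…g_n]) = P_{(E,W)}(g)[P_{(E,W)}(g_1)…P_{(E,W)}(g_n)] as n-place functions on A_E. -/
universe u

namespace NPlace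

variable {n : ℕ} {A : Type u}

/-- The stabilizer `H^a_Φ = {f ∈ Φ : f(a,…,a) = a}`. -/
def stab (Φ : Set (NPlace n A)) (a : A) : Set (NPlace n A) :=
  {f | f ∈ Φ ∧ a ∈ f fun _ => a}

/-- `U^a_Φ = {f ∈ Φ : (a,…,a) ∈ dom f}`. -/
def ustab (Φ : Set (NPlace n A)) (a : A) : Set (NPlace n A) :=
  {f | f ∈ Φ ∧ (f fun _ => a).Dom}

end NPlace

/-- A Menger algebra of rank `n`: an `(n+1)`-ary superassociative operation. -/
structure MengerAlg (n : ℕ) (G : Type u) where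
  o : G → (Fin n → G) → G
  A1 : ∀ (x : G) (y z : Fin n → G), o (o x y) z = o x fun i => o (y i) z

/-- The equivalence class of `x` modulo the relation `E`. -/
def eClass {G : Type u} (E : G → G → Prop) (x : G) : Set G := {y | E x y}

/-- The index set `A_E`: `E`-classes different from `W`. -/
def AE {G : Type u} (E : G → G → Prop) (W : Set G) : Type u :=
  {S : Set G // (∃ x : G, S = eClass E x) ∧ S ≠ W}

/-- The set `g[H_{a₁}…H_{aₙ}]` of all values `g[h₁…hₙ]` with `hᵢ ∈ H_{aᵢ}`. -/
def MengerAlg.im {n : ℕ} {G : Type u} (M : MengerAlg n G) {E : G → G → Prop}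
    {W : Set G} (g : G) (a : Fin n → AE E W) : Set G :=
  {z | ∃ h : Fin n → G, (∀ i, h i ∈ (a i).1) ∧ z = M.o g h}

/-- The simplest representation `P_{(E,W)}` is a representation of `(G, o)` by
`n`-place functions: `P(g[g₁…gₙ]) = P(g)[P(g₁)…P(gₙ)]`. -/
theorem simplestRep_isRep {n : ℕ} {G : Type u} (M : MengerAlg n G)
    (E : G → G → Prop) (hE : Equivalence E)
    (hreg : ∀ (z : G) (x y : Fin n → G), (∀ i, E (x i) (y i)) →
      E (M.o z x) (M.o z y))
    (W : Set G)
    (hW : W = ∅ ∨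
      ((∀ (x : G) (y : Fin n → G), (∃ i, y i ∈ W) → M.o x y ∈ W) ∧
        ∃ w : G, W = eClass E w))
    (P : G → NPlace n (AE E W))
    (hP : ∀ (g : G) (a : Fin n → AE E W),
      ((P g a).Dom ↔ M.im g a ∩ W = ∅) ∧
      ∀ b : AE E W, b ∈ P g a ↔ (M.im g a ∩ W = ∅ ∧ M.im g a ⊆ b.1)) :
    ∀ (g : G) (gs : Fin n → G),
      P (M.o g gs) = NPlace.comp (P g) fun i => P (gs i) := by

  -- Auxiliary facts about E-classes
  have hclassE : ∀ (c : AE E W) (y z : G), y ∈ c.1 → E y z → z ∈ c.1 := by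
    rintro ⟨S, ⟨x, rfl⟩, _⟩ y z hy hyz
    exact hE.trans hy hyz
  have hrel : ∀ (c : AE E W) (y z : G), y ∈ c.1 → z ∈ c.1 → E y z := by
    rintro ⟨S, ⟨x, rfl⟩, _⟩ y z hy hz
    exact hE.trans (hE.symm hy) hz
  have hne : ∀ c : AE E W, ∃ x, x ∈ c.1 := by
    rintro ⟨S, ⟨x, rfl⟩, _⟩
    exact ⟨x, hE.refl x⟩
  have hWclosed : ∀ y z : G, y ∈ W → E y z → z ∈ W := by
    intro y z hy hyz
    rcases hW with h0 | ⟨_, w, rfl⟩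
    · simp [h0] at hy
    · exact hE.trans hy hyz
  intro g gs
  funext a
  choose h0 hh0 using fun i => hne (a i)
  apply Part.ext
  intro b
  simp only [NPlace.comp]
  erw [Part.mem_bind_iff]
  simp only [Part.mem_mk_iff]
  constructor
  · intro hb
    obtain ⟨hdisj, hsub⟩ := ((hP (M.o g gs) a).2 b).mp hb
    have hdi : ∀ i, M.im (gs i) a ∩ W = ∅ := by
      intro i
      rw [Set.eq_empty_iff_forall_notMem]
      rintro z ⟨⟨h, hh, rfl⟩, hzW⟩
      rcases hW with h0 | ⟨hid, _⟩
      · simp [h0] at hzW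
      · have hmem : M.o (M.o g gs) h ∈ M.im (M.o g gs) a := ⟨h, hh, rfl⟩
        have hW2 : M.o (M.o g gs) h ∈ W := by
          rw [M.A1]; exact hid g _ ⟨i, hzW⟩
        exact Set.eq_empty_iff_forall_notMem.mp hdisj _ ⟨hmem, hW2⟩
    have hDom : ∀ i, (P (gs i) a).Dom := fun i => (hP (gs i) a).1.mpr (hdi i)
    set c : Fin n → AE E W := fun i => (P (gs i) a).get (hDom i) with hc
    have hci : ∀ i, M.im (gs i) a ⊆ (c i).1 := fun i =>
      (((hP (gs i) a).2 (c i)).mp (Part.get_mem (hDom i))).2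
    refine ⟨c, ⟨hDom, rfl⟩, ?_⟩
    apply ((hP g c).2 b).mpr
    have key : ∀ z ∈ M.im g c, E z (M.o (M.o g gs) h0) := by
      rintro z ⟨k, hk, rfl⟩
      rw [M.A1]
      exact hreg g k _ fun i =>
        hrel (c i) (k i) (M.o (gs i) h0) (hk i) (hci i ⟨h0, hh0, rfl⟩)
    have hbase : M.o (M.o g gs) h0 ∈ M.im (M.o g gs) a := ⟨h0, hh0, rfl⟩
    constructor
    · rw [Set.eq_empty_iff_forall_notMem]
      rintro z ⟨hz, hzW⟩
      exact Set.eq_empty_iff_forall_notMem.mp hdisj _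
        ⟨hbase, hWclosed z _ hzW (key z hz)⟩
    · intro z hz
      exact hclassE b _ z (hsub hbase) (hE.symm (key z hz))
  · rintro ⟨c, ⟨hDom, rfl⟩, hb⟩
    obtain ⟨hdisj, hsub⟩ := ((hP g _).2 b).mp hb
    have hci : ∀ i, M.im (gs i) a ⊆ ((P (gs i) a).get (hDom i)).1 := fun i =>
      (((hP (gs i) a).2 _).mp (Part.get_mem (hDom i))).2
    have him : ∀ z ∈ M.im (M.o g gs) a,
        z ∈ M.im g (fun i => (P (gs i) a).get (hDom i)) := by
      rintro z ⟨h, hh, rfl⟩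
      exact ⟨fun i => M.o (gs i) h, fun i => hci i ⟨h, hh, rfl⟩, M.A1 g gs h⟩
    apply ((hP (M.o g gs) a).2 b).mpr
    constructor
    · rw [Set.eq_empty_iff_forall_notMem]
      rintro z ⟨hz, hzW⟩
      exact Set.eq_empty_iff_forall_notMem.mp hdisj _ ⟨him z hz, hzW⟩
    · exact fun z hz => hsub (him z hz)
end

section
/- Let 𝒢 = (G, o, R_1, …, R_n) be a functional Menger system of rank n, let H ⊆ G be a quasi-stable l-unitary normal v-complex, and let U ⊆ G satisfy H ⊆ U, R_i U ⊆ H, R_i(G∖U) ⊆ G∖U for every i ∈ {1,…,n}, and the condition: x, y ∈ H and t(x) ∈ U imply t(y) ∈ U for all t ∈ T_n(G). Let E = E_H ∩ E_U, where E_X = {(x,y) : for all t ∈ T_n(G), t(x) ∈ X ⇔ t(y) ∈ X}, and let W = G∖U. Then for every g ∈ G and every i ∈ {1,…,n}: dom P_{(E,W)}(R_i g) = dom P_{(E,W)}(g), and P_{(E,W)}(R_i g) = R_i P_{(E,W)}(g). -/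
universe u

/-- The set `g[H_{a₁}…H_{aₙ}]` of all values `g[h₁…hₙ]` with `hᵢ ∈ H_{aᵢ}`. -/
def MengerSystem.im {n : ℕ} {G : Type u} (M : MengerSystem n G)
    {E : G → G → Prop} {W : Set G} (g : G) (a : Fin n → AE E W) : Set G :=
  {z | ∃ h : Fin n → G, (∀ i, h i ∈ (a i).1) ∧ z = M.o g h}


section Aux

variable {n : ℕ} {G : Type u}

/-- Coordinates of a product can be replaced one at a time inside a normal v-complex. -/
lemma MengerSystem.replace_mem (M : MengerSystem n G) {H : Set G}
    (hnc : M.NormalVComplex H) (z : G) (u v : Fin n → G)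
    (hu : ∀ j, u j ∈ H) (hv : ∀ j, v j ∈ H) (h : M.o z u ∈ H) : M.o z v ∈ H := by
  have key : ∀ k : ℕ, k ≤ n →
      M.o z (fun j => if (j : ℕ) < k then v j else u j) ∈ H := by
    intro k
    induction k with
    | zero =>
      intro _
      have he : (fun j : Fin n => if (j : ℕ) < 0 then v j else u j) = u := by
        funext j; simp
      rw [he]; exact h
    | succ k ih =>
      intro hk
      have hkn : k < n := hk
      have hcur := ih (le_of_lt hkn)
      have ht : M.IsTn (fun w => M.o z (Function.update
          (fun j : Fin n => if (j : ℕ) < k then v j else u j) ⟨k, hkn⟩ w)) := by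
        exact MengerSystem.IsTn.op (M := M) id z
          (fun j : Fin n => if (j : ℕ) < k then v j else u j) ⟨k, hkn⟩ MengerSystem.IsTn.id
      have h1 : M.o z (Function.update
          (fun j : Fin n => if (j : ℕ) < k then v j else u j) ⟨k, hkn⟩ (u ⟨k, hkn⟩)) ∈ H := by
        have he : Function.update (fun j : Fin n => if (j : ℕ) < k then v j else u j)
            ⟨k, hkn⟩ (u ⟨k, hkn⟩) = fun j : Fin n => if (j : ℕ) < k then v j else u j := by
          funext j
          rcases eq_or_ne j ⟨k, hkn⟩ with rfl | hj
          · simp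
          · simp [Function.update_of_ne hj]
        rw [he]; exact hcur
      have h2 : M.o z (Function.update
          (fun j : Fin n => if (j : ℕ) < k then v j else u j) ⟨k, hkn⟩ (v ⟨k, hkn⟩)) ∈ H :=
        hnc _ ht (u ⟨k, hkn⟩) (hu _) (v ⟨k, hkn⟩) (hv _) h1
      have he2 : Function.update (fun j : Fin n => if (j : ℕ) < k then v j else u j)
          ⟨k, hkn⟩ (v ⟨k, hkn⟩) = fun j : Fin n => if (j : ℕ) < k + 1 then v j else u j := by
        funext j
        rcases eq_or_ne j ⟨k, hkn⟩ with rfl | hj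
        · simp
        · have hjk : (j : ℕ) ≠ k := fun hh => hj (Fin.ext hh)
          have hlt : ((j : ℕ) < k + 1) = ((j : ℕ) < k) := by
            simp only [eq_iff_iff]; omega
          simp [Function.update_of_ne hj, hlt]
      rw [he2] at h2
      exact h2
  have hfin := key n le_rfl
  have he : (fun j : Fin n => if (j : ℕ) < n then v j else u j) = v := by
    funext j; simp [j.isLt]
  rwa [he] at hfin

/-- Every `t ∈ Tₙ(G)` commutes with right translation by `R̄y`. -/
lemma MengerSystem.tn_comm (M : MengerSystem n G) {t : G → G} (ht : M.IsTn t) (y : G) :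
    ∀ x, t (M.o x fun j => M.R j y) = M.o (t x) fun j => M.R j y := by
  induction ht with
  | id => intro x; rfl
  | op t a b i ht ih =>
    intro x
    show M.o a (Function.update b i (t (M.o x fun j => M.R j y)))
        = M.o (M.o a (Function.update b i (t x))) fun j => M.R j y
    rw [ih x]
    exact (M.A3 a b i (t x) y).symm
  | proj t i ht ih =>
    intro x
    show M.R i (t (M.o x fun j => M.R j y)) = M.o (M.R i (t x)) fun j => M.R j y
    rw [ih x]
    exact M.A4 i (t x) y

variable (M : MengerSystem n G) {H U : Set G}

lemma MengerSystem.memU_iff (hHU : H ⊆ U) (hRU : ∀ i : Fin n, ∀ x ∈ U, M.R i x ∈ H)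
    (hRU' : ∀ i : Fin n, ∀ x ∈ Uᶜ, M.R i x ∈ Uᶜ)
    (i : Fin n) (x : G) : x ∈ U ↔ M.R i x ∈ H := by
  constructor
  · exact fun h => hRU i x h
  · intro h
    by_contra hx
    exact hRU' i x hx (hHU h)

lemma MengerSystem.oR_mem_H_iff (hqs : M.QuasiStable H) (hlu : M.LUnitary H)
    (hnc : M.NormalVComplex H) {y : G} (hy : ∀ j, M.R j y ∈ H) (z : G) :
    (M.o z fun j => M.R j y) ∈ H ↔ z ∈ H := by
  constructor
  · intro h
    refine hlu z (M.o z fun j => M.R j y) ?_ h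
    exact M.replace_mem hnc z (fun j => M.R j y) (fun _ => M.o z fun j => M.R j y)
      hy (fun _ => h) h
  · intro hz
    exact M.replace_mem hnc z (fun _ => z) (fun j => M.R j y) (fun _ => hz) hy (hqs z hz)

lemma MengerSystem.oR_mem_U_iff (hqs : M.QuasiStable H) (hlu : M.LUnitary H)
    (hnc : M.NormalVComplex H) (hHU : H ⊆ U) (hRU : ∀ i : Fin n, ∀ x ∈ U, M.R i x ∈ H)
    (hRU' : ∀ i : Fin n, ∀ x ∈ Uᶜ, M.R i x ∈ Uᶜ)
    (i : Fin n) {y : G} (hyU : y ∈ U) (z : G) :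
    (M.o z fun j => M.R j y) ∈ U ↔ z ∈ U := by
  have hy : ∀ j, M.R j y ∈ H := fun j => hRU j y hyU
  have h1 := M.memU_iff hHU hRU hRU' i (M.o z fun j => M.R j y)
  rw [M.A4] at h1
  exact h1.trans ((M.oR_mem_H_iff hqs hlu hnc hy (M.R i z)).trans
    (M.memU_iff hHU hRU hRU' i z).symm)

/-- If a product is in `U` then each of its arguments is in `U`. -/
lemma MengerSystem.arg_mem_U (hqs : M.QuasiStable H) (hlu : M.LUnitary H)
    (hnc : M.NormalVComplex H) (hHU : H ⊆ U) (hRU : ∀ i : Fin n, ∀ x ∈ U, M.R i x ∈ H)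
    (hRU' : ∀ i : Fin n, ∀ x ∈ Uᶜ, M.R i x ∈ Uᶜ)
    {a : G} {ys : Fin n → G} (hw : M.o a ys ∈ U) (i : Fin n) :
    ys i ∈ U := by
  have hRw : ∀ j, M.R j (M.o a ys) ∈ H := fun j => hRU j _ hw
  have h1 : M.R i (M.o a ys) ∈ H := hRw i
  rw [M.A6 i i, M.A7, M.A4] at h1
  have h2 := (M.oR_mem_H_iff hqs hlu hnc hRw (M.R i (ys i))).mp h1
  exact (M.memU_iff hHU hRU hRU' i (ys i)).mpr h2

/-- Every `t ∈ Tₙ(G)` preserves the complement of `U`. -/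
lemma MengerSystem.tn_notU (hqs : M.QuasiStable H) (hlu : M.LUnitary H)
    (hnc : M.NormalVComplex H) (hHU : H ⊆ U) (hRU : ∀ i : Fin n, ∀ x ∈ U, M.R i x ∈ H)
    (hRU' : ∀ i : Fin n, ∀ x ∈ Uᶜ, M.R i x ∈ Uᶜ)
    {t : G → G} (ht : M.IsTn t) : ∀ x, x ∉ U → t x ∉ U := by
  induction ht with
  | id => exact fun x hx => hx
  | op t a b i ht ih =>
    intro x hx h
    have h' : M.o a (Function.update b i (t x)) ∈ U := h
    have harg := M.arg_mem_U hqs hlu hnc hHU hRU hRU' h' i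
    rw [Function.update_self] at harg
    exact ih x hx harg
  | proj t i ht ih =>
    intro x hx h
    exact hRU' i (t x) (ih x hx) h

end Aux

/-- For `E = E_H ∩ E_U` and `W = G∖U`, the simplest representation satisfies
`dom P(Rᵢ g) = dom P(g)` and `P(Rᵢ g) = Rᵢ P(g)`. -/
theorem simplestRep_Ri {n : ℕ} {G : Type u} (M : MengerSystem n G)
    (H U : Set G)
    (hqs : M.QuasiStable H) (hlu : M.LUnitary H) (hnc : M.NormalVComplex H)
    (hHU : H ⊆ U) (hRU : ∀ i : Fin n, ∀ x ∈ U, M.R i x ∈ H)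
    (hRU' : ∀ i : Fin n, ∀ x ∈ Uᶜ, M.R i x ∈ Uᶜ)
    (hf1 : ∀ (x y : G) (t : G → G), M.IsTn t →
      x ∈ H → y ∈ H → t x ∈ U → t y ∈ U)
    (E : G → G → Prop)
    (hE : ∀ x y : G, E x y ↔
      ((∀ t : G → G, M.IsTn t → (t x ∈ H ↔ t y ∈ H)) ∧
       (∀ t : G → G, M.IsTn t → (t x ∈ U ↔ t y ∈ U))))
    (P : G → NPlace n (AE E Uᶜ))
    (hP : ∀ (g : G) (a : Fin n → AE E Uᶜ),
      ((P g a).Dom ↔ M.im g a ∩ Uᶜ = ∅) ∧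
      ∀ b : AE E Uᶜ, b ∈ P g a ↔ (M.im g a ∩ Uᶜ = ∅ ∧ M.im g a ⊆ b.1)) :
    ∀ (g : G) (i : Fin n),
      (∀ a : Fin n → AE E Uᶜ, (P (M.R i g) a).Dom ↔ (P g a).Dom) ∧
      P (M.R i g) = NPlace.Ri i (P g) := by
  classical
  -- E is an equivalence relation
  have Erefl : ∀ x, E x x := fun x => (hE x x).mpr ⟨fun _ _ => Iff.rfl, fun _ _ => Iff.rfl⟩
  have Esymm : ∀ {x y}, E x y → E y x := by
    intro x y h
    rcases (hE x y).mp h with ⟨h1, h2⟩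
    exact (hE y x).mpr ⟨fun t ht => (h1 t ht).symm, fun t ht => (h2 t ht).symm⟩
  have Etrans : ∀ {x y z}, E x y → E y z → E x z := by
    intro x y z hxy hyz
    rcases (hE x y).mp hxy with ⟨h1, h2⟩
    rcases (hE y z).mp hyz with ⟨h3, h4⟩
    exact (hE x z).mpr ⟨fun t ht => (h1 t ht).trans (h3 t ht),
      fun t ht => (h2 t ht).trans (h4 t ht)⟩
  have EmemU : ∀ {x y}, E x y → (x ∈ U ↔ y ∈ U) := by
    intro x y h
    exact ((hE x y).mp h).2 id MengerSystem.IsTn.id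
  have EnotU : ∀ {x y}, x ∉ U → y ∉ U → E x y := by
    intro x y hx hy
    refine (hE x y).mpr ⟨fun t ht => ?_, fun t ht => ?_⟩
    · constructor
      · intro h; exact absurd (hHU h) (M.tn_notU hqs hlu hnc hHU hRU hRU' ht x hx)
      · intro h; exact absurd (hHU h) (M.tn_notU hqs hlu hnc hHU hRU hRU' ht y hy)
    · constructor
      · intro h; exact absurd h (M.tn_notU hqs hlu hnc hHU hRU hRU' ht x hx)
      · intro h; exact absurd h (M.tn_notU hqs hlu hnc hHU hRU hRU' ht y hy)
  -- classes different from Uᶜ are contained in U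
  have classU : ∀ (a : AE E Uᶜ), ∀ x ∈ a.1, x ∈ U := by
    intro a x hx
    by_contra hxU
    apply a.2.2
    obtain ⟨x0, hx0⟩ := a.2.1
    rw [hx0] at hx ⊢
    have hx0x : E x0 x := hx
    ext y
    constructor
    · intro hy
      have hxy : E x y := Etrans (Esymm hx0x) hy
      intro hyU
      exact hxU ((EmemU hxy).mpr hyU)
    · intro hy
      exact Etrans hx0x (EnotU hxU hy)
  -- membership in a class is E-invariant
  have classMem : ∀ (a : AE E Uᶜ) {x z : G}, x ∈ a.1 → E x z → z ∈ a.1 := by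
    intro a x z hx hxz
    obtain ⟨x0, hx0⟩ := a.2.1
    rw [hx0] at hx ⊢
    exact Etrans hx hxz
  -- two classes with a common element coincide
  have classesEq : ∀ (a b : AE E Uᶜ) (z : G), z ∈ a.1 → z ∈ b.1 → a = b := by
    intro a b z ha hb
    apply Subtype.ext
    obtain ⟨xa, hxa⟩ := a.2.1
    obtain ⟨xb, hxb⟩ := b.2.1
    rw [hxa] at ha ⊢
    rw [hxb] at hb ⊢
    ext y
    constructor
    · intro hy; exact Etrans hb (Etrans (Esymm ha) hy)
    · intro hy; exact Etrans ha (Etrans (Esymm hb) hy)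
  intro g i
  -- key: x[R̄y] E x for y ∈ U
  have EoR : ∀ (x : G) {y : G}, y ∈ U → E (M.o x fun j => M.R j y) x := by
    intro x y hyU
    have hy : ∀ j, M.R j y ∈ H := fun j => hRU j y hyU
    refine (hE _ x).mpr ⟨fun t ht => ?_, fun t ht => ?_⟩
    · rw [M.tn_comm ht y x]
      exact M.oR_mem_H_iff hqs hlu hnc hy (t x)
    · rw [M.tn_comm ht y x]
      exact M.oR_mem_U_iff hqs hlu hnc hHU hRU hRU' i hyU (t x)
  -- emptiness of im ∩ Uᶜ rephrased
  have imU_iff : ∀ (f : G) (a : Fin n → AE E Uᶜ),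
      M.im f a ∩ Uᶜ = ∅ ↔ ∀ h : Fin n → G, (∀ j, h j ∈ (a j).1) → M.o f h ∈ U := by
    intro f a
    constructor
    · intro he h hh
      by_contra hn
      have : M.o f h ∈ M.im f a ∩ Uᶜ := ⟨⟨h, hh, rfl⟩, hn⟩
      rw [he] at this
      exact this
    · intro hall
      ext z
      simp only [Set.mem_inter_iff, Set.mem_empty_iff_false, iff_false, not_and]
      rintro ⟨h, hh, rfl⟩
      exact fun hz => hz (hall h hh)
  -- pointwise equivalence
  have hpt : ∀ (a : Fin n → AE E Uᶜ) (h : Fin n → G), (∀ j, h j ∈ (a j).1) →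
      (M.o (M.R i g) h ∈ U ↔ M.o g h ∈ U) := by
    intro a h hh
    have hhU : ∀ j, h j ∈ U := fun j => classU (a j) (h j) (hh j)
    rw [M.A7]
    constructor
    · intro hu
      by_contra hgU
      have harg := M.arg_mem_U hqs hlu hnc hHU hRU hRU' hu i
      exact hRU' i (M.o g h) hgU harg
    · intro hu
      exact (M.oR_mem_U_iff hqs hlu hnc hHU hRU hRU' i hu (h i)).mpr (hhU i)
  have hds : ∀ a : Fin n → AE E Uᶜ,
      (M.im (M.R i g) a ∩ Uᶜ = ∅ ↔ M.im g a ∩ Uᶜ = ∅) := by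
    intro a
    rw [imU_iff, imU_iff]
    exact forall_congr' fun h => forall_congr' fun hh => by rw [hpt a h hh]
  constructor
  · intro a
    rw [(hP (M.R i g) a).1, (hP g a).1]
    exact hds a
  · funext a
    apply Part.ext
    intro b
    rw [(hP (M.R i g) a).2 b]
    show _ ↔ b ∈ (P g a).map fun _ => a i
    rw [Part.mem_map_iff]
    by_cases dg : M.im g a ∩ Uᶜ = ∅
    · have dg' := (imU_iff g a).mp dg
      have dri : M.im (M.R i g) a ∩ Uᶜ = ∅ := (hds a).mpr dg
      -- pick representatives of the classes
      have hch : ∀ j : Fin n, ∃ x, x ∈ (a j).1 := by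
        intro j
        obtain ⟨x0, hx0⟩ := (a j).2.1
        exact ⟨x0, by rw [hx0]; exact Erefl x0⟩
      choose h0 hh0 using hch
      have imsub : M.im (M.R i g) a ⊆ (a i).1 := by
        rintro z ⟨h, hh, rfl⟩
        have hw : M.o g h ∈ U := dg' h hh
        have hEz : E (M.o (M.R i g) h) (h i) := by
          rw [M.A7]
          exact EoR (h i) hw
        exact classMem (a i) (hh i) (Esymm hEz)
      have imne : M.o (M.R i g) h0 ∈ M.im (M.R i g) a := ⟨h0, hh0, rfl⟩
      have key : ∀ c : AE E Uᶜ, M.im (M.R i g) a ⊆ c.1 ↔ c = a i := by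
        intro c
        constructor
        · intro hc
          exact (classesEq c (a i) _ (hc imne) (imsub imne)).symm ▸
            classesEq c (a i) _ (hc imne) (imsub imne) ▸ rfl
        · rintro rfl
          exact imsub
      constructor
      · rintro ⟨_, hsub⟩
        refine ⟨(P g a).get ((hP g a).1.mpr dg), Part.get_mem _, ?_⟩
        exact ((key b).mp hsub).symm
      · rintro ⟨c, hc, rfl⟩
        exact ⟨dri, (key (a i)).mpr rfl⟩
    · constructor
      · rintro ⟨hd, _⟩
        exact absurd ((hds a).mp hd) dg
      · rintro ⟨c, hc, rfl⟩
        exact absurd (((hP g a).2 c).mp hc).1 dg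
end

section
/- Let 𝒢 = (G, o, R_1, …, R_n) be a functional Menger system of rank n, let H ⊆ G be a quasi-stable l-unitary normal v-complex, and let U ⊆ G satisfy H ⊆ U, R_i U ⊆ H, R_i(G∖U) ⊆ G∖U for every i ∈ {1,…,n}, and the condition: x, y ∈ H and t(x) ∈ U imply t(y) ∈ U for all t ∈ T_n(G). Let E = E_H ∩ E_U, where E_X = {(x,y) : for all t ∈ T_n(G), t(x) ∈ X ⇔ t(y) ∈ X}, let W = G∖U, and let a ∈ A_E be the index of the E-class H (i.e., H_a = H). Then for every g ∈ G: g ∈ H if and only if P_{(E,W)}(g)(a,…,a) = a. -/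
universe u

/-- For `E = E_H ∩ E_U`, `W = G∖U` and `a` the index of the `E`-class `H`:
`g ∈ H ↔ P_{(E,W)}(g)(a,…,a) = a`. -/
theorem simplestRep_stab {n : ℕ} {G : Type u} (M : MengerSystem n G)
    (H U : Set G)
    (hqs : M.QuasiStable H) (hlu : M.LUnitary H) (hnc : M.NormalVComplex H)
    (hHU : H ⊆ U) (hRU : ∀ i : Fin n, ∀ x ∈ U, M.R i x ∈ H)
    (hRU' : ∀ i : Fin n, ∀ x ∈ Uᶜ, M.R i x ∈ Uᶜ)
    (hf1 : ∀ (x y : G) (t : G → G), M.IsTn t →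
      x ∈ H → y ∈ H → t x ∈ U → t y ∈ U)
    (E : G → G → Prop)
    (hE : ∀ x y : G, E x y ↔
      ((∀ t : G → G, M.IsTn t → (t x ∈ H ↔ t y ∈ H)) ∧
       (∀ t : G → G, M.IsTn t → (t x ∈ U ↔ t y ∈ U))))
    (P : G → NPlace n (AE E Uᶜ))
    (hP : ∀ (g : G) (a : Fin n → AE E Uᶜ),
      ((P g a).Dom ↔ M.im g a ∩ Uᶜ = ∅) ∧
      ∀ b : AE E Uᶜ, b ∈ P g a ↔ (M.im g a ∩ Uᶜ = ∅ ∧ M.im g a ⊆ b.1))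
    (a : AE E Uᶜ) (ha : a.1 = H) :
    ∀ g : G, g ∈ H ↔ a ∈ P g fun _ => a := by

  have hErefl : ∀ x : G, E x x := fun x =>
    (hE x x).mpr ⟨fun t _ => Iff.rfl, fun t _ => Iff.rfl⟩
  have hstab : ∀ g ∈ H, ∀ h : Fin n → G, (∀ i, h i ∈ H) → M.o g h ∈ H := by
    intro g hg h hh
    have key : ∀ k : ℕ, k ≤ n →
        M.o g (fun i => if (i : ℕ) < k then h i else g) ∈ H := by
      intro k
      induction k with
      | zero => intro _; simpa using hqs g hg
      | succ k ih =>
        intro hk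
        have hkn : k < n := hk
        set c : Fin n → G := fun i => if (i : ℕ) < k then h i else g with hc
        have hck : c ⟨k, hkn⟩ = g := by simp [hc]
        have heq : (fun i : Fin n => if (i : ℕ) < k + 1 then h i else g)
            = Function.update c ⟨k, hkn⟩ (h ⟨k, hkn⟩) := by
          funext i
          rcases eq_or_ne i ⟨k, hkn⟩ with h' | h'
          · subst h'; simp
          · have hik : (i : ℕ) ≠ k := fun hh' => h' (Fin.ext hh')
            rw [Function.update_of_ne h']
            simp [hc, Nat.lt_succ_iff_lt_or_eq, Nat.le_iff_lt_or_eq, hik]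
        have ht : M.IsTn (fun x => M.o g (Function.update c ⟨k, hkn⟩ x)) := by
          simpa using MengerSystem.IsTn.op id g c ⟨k, hkn⟩ MengerSystem.IsTn.id
        have htg : M.o g (Function.update c ⟨k, hkn⟩ g) ∈ H := by
          have hu : Function.update c ⟨k, hkn⟩ g = c := by
            conv_lhs => rw [← hck]
            exact Function.update_eq_self _ _
          rw [hu]; exact ih (Nat.le_of_lt hk)
        have := hnc _ ht g hg (h ⟨k, hkn⟩) (hh _) htg
        rw [heq]
        exact this
    have := key n le_rfl
    simpa [Fin.is_lt] using this
  intro g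
  rw [(hP g (fun _ => a)).2 a]
  constructor
  · intro hg
    have him : M.im g (fun _ => a) ⊆ H := by
      rintro z ⟨h, hh, rfl⟩
      exact hstab g hg h fun i => ha ▸ hh i
    refine ⟨?_, ha ▸ him⟩
    ext z
    simp only [Set.mem_inter_iff, Set.mem_empty_iff_false, iff_false, not_and,
      Set.mem_compl_iff, not_not]
    exact fun hz => hHU (him hz)
  · rintro ⟨-, him⟩
    obtain ⟨x, hx⟩ := a.2.1
    have hxa : x ∈ a.1 := by rw [hx]; exact hErefl x
    have hxH : x ∈ H := ha ▸ hxa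
    have hmem : M.o g (fun _ => x) ∈ a.1 :=
      him ⟨fun _ => x, fun _ => hxa, rfl⟩
    exact hlu g x (ha ▸ hmem) hxH
end

section
/- Let 𝒢 = (G, o, R_1, …, R_n) be a functional Menger system of rank n and let H ⊆ G be a stable v-unitary subset with R_i H ⊆ H for every i ∈ {1,…,n}. Let χ(H) = {x ∈ G : there exists h ∈ H with h ⊏ x}. Then for all x, y ∈ G: (i) if x ∈ χ(H) and y ∈ H, then y[R_1x…R_nx] ∈ H; (ii) if x ∈ χ(H) and y ∈ χ(H), then y[R_1x…R_nx] ∈ χ(H). -/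
universe u

namespace MengerSystem

variable {n : ℕ} {G : Type u}

lemma RR (M : MengerSystem n G) (i k : Fin n) (x : G) :
    M.R i (M.R k x) = M.R i x := by
  have h1 : M.o (M.R k x) (fun j => M.R j x) = M.R k x := by
    have h := M.A4 k x x
    rw [M.A2] at h
    exact h.symm
  have h2 := M.A6 i k x (fun j => M.R j x)
  rw [M.A2, h1] at h2
  exact h2.symm

/-- key lemma: `h ⊏ x → ∀ i, (Rᵢx)[R₁h…Rₙh] = Rᵢh`. -/
lemma star (M : MengerSystem n G) [NeZero n] {h x : G} (hs : M.sub h x)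
    (i : Fin n) : M.o (M.R i x) (fun j => M.R j h) = M.R i h := by
  have hs' : M.R 0 h = M.o (M.R 0 x) (fun j => M.R j h) := by
    have := hs
    unfold sub le at this
    simpa only [M.RR] using this
  have key : M.R 0 h
      = M.o (M.R 0 h) (fun j => M.R j (M.o x fun j => M.R j h)) :=
    hs'.trans (M.A7 0 x (fun j => M.R j h))
  have keyi : M.R i h
      = M.o (M.R i h) (fun j => M.R j (M.o x fun j => M.R j h)) := by
    have := congrArg (M.R i) key
    rwa [M.A4, M.RR] at this
  rw [M.A7 i x (fun j => M.R j h)]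
  exact keyi.symm

end MengerSystem

/-- For a stable v-unitary `H` with `Rᵢ H ⊆ H` and `χ(H) = {x | ∃ h ∈ H, h ⊏ x}`:
(i) `x ∈ χ(H) ∧ y ∈ H → y[R₁x…Rₙx] ∈ H`;
(ii) `x ∈ χ(H) ∧ y ∈ χ(H) → y[R₁x…Rₙx] ∈ χ(H)`. -/
theorem chiH_conditions {n : ℕ} {G : Type u} [NeZero n] (M : MengerSystem n G)
    (H : Set G)
    (hst : M.Stable H) (hvu : M.VUnitary H)
    (hRH : ∀ i : Fin n, ∀ x ∈ H, M.R i x ∈ H) :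
    (∀ x ∈ {x : G | ∃ h ∈ H, M.sub h x}, ∀ y ∈ H,
      M.o y (fun j => M.R j x) ∈ H) ∧
    (∀ x ∈ {x : G | ∃ h ∈ H, M.sub h x}, ∀ y ∈ {x : G | ∃ h ∈ H, M.sub h x},
      M.o y (fun j => M.R j x) ∈ {x : G | ∃ h ∈ H, M.sub h x}) := by
  have part1 : ∀ x ∈ {x : G | ∃ h ∈ H, M.sub h x}, ∀ y ∈ H,
      M.o y (fun j => M.R j x) ∈ H := by
    rintro x ⟨h, hhH, hsub⟩ y hy
    have hRh : ∀ j : Fin n, M.R j h ∈ H := fun j => hRH j h hhH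
    have heq : M.o (M.o y fun j => M.R j x) (fun j => M.R j h)
        = M.o y (fun j => M.R j h) := by
      rw [M.A1]
      congr 1
      funext i
      exact M.star hsub i
    apply hvu _ (fun j => M.R j h) _ hRh
    rw [heq]
    exact hst y _ hy hRh
  refine ⟨part1, ?_⟩
  rintro x hx y ⟨hy, hhyH, hsuby⟩
  obtain ⟨hx', hhxH, hsubx⟩ := hx
  refine ⟨M.o hy (fun j => M.R j hx'), ?_, ?_⟩
  · exact hst hy _ hhyH fun j => hRH j hx' hhxH
  · show M.le _ _
    unfold MengerSystem.le
    simp only [M.RR, M.A4]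
    calc M.o (M.R 0 hy) (fun j => M.R j hx')
        = M.o (M.o (M.R 0 y) fun j => M.R j hy) (fun j => M.R j hx') := by
          rw [← M.star hsuby 0]
      _ = M.o (M.o (M.R 0 y) fun j => M.R j hx') (fun j => M.R j hy) := M.A5 _ _ _
      _ = M.o (M.R 0 y) (fun i => M.o (M.o (M.R i x) fun j => M.R j hx')
            (fun j => M.R j hy)) := by
          rw [M.A1]
          congr 1
          funext i
          rw [← M.star hsubx i]
      _ = M.o (M.R 0 y) (fun i => M.o (M.o (M.R i x) fun j => M.R j hy)
            (fun j => M.R j hx')) := by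
          congr 1
          funext i
          rw [M.A5]
      _ = M.o (M.R 0 y) (fun i => M.o (M.R i x)
            (fun j => M.o (M.R j hy) fun k => M.R k hx')) := by
          congr 1
          funext i
          rw [M.A1]
      _ = M.o (M.o (M.R 0 y) fun j => M.R j x)
            (fun j => M.o (M.R j hy) fun k => M.R k hx') := (M.A1 _ _ _).symm
end
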